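/- Let L be a Poisson algebra over ℝ, I a Jordan ideal of L, and N = {g ∈ L : {g, f} ∈ I for all f ∈ I} its Lie normalizer. Then N ∩ I is a Lie-Jordan ideal of N: N ∘ (N ∩ I) ⊆ N ∩ I and {N, N ∩ I} ⊆ N ∩ I. Consequently the quotient N ⧸ (N ∩ I) inherits a Poisson algebra structure for which the canonical projection is a homomorphism of both products. -/

import Mathlib

/-- A Poisson bracket on a commutative associative ℝ-algebra `L`:
an ℝ-bilinear antisymmetric bracket satisfying the Jacobi identity and the
Leibniz rule with respect to the (Jordan) product of `L`. -/
structure PoissonBracket (L : Type*) [CommRing L] [Algebra ℝ L] where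
  bracket : L → L → L
  add_left : ∀ a b c : L, bracket (a + b) c = bracket a c + bracket b c
  smul_left : ∀ (r : ℝ) (a b : L), bracket (r • a) b = r • bracket a b
  antisymm : ∀ a b : L, bracket a b = - bracket b a
  jacobi : ∀ a b c : L,
    bracket a (bracket b c) + bracket b (bracket c a) + bracket c (bracket a b) = 0
  leibniz : ∀ a b c : L, bracket (a * b) c = a * bracket b c + bracket a c * b

/-- Section 3.2: `N ∩ I` is a Lie-Jordan ideal of the Lie normalizer `N` of
`I`, and consequently `N ⧸ (N ∩ I)` inherits a Poisson algebra structure for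
which the canonical projection is a homomorphism of both products. -/
theorem stmt7 {L : Type*} [CommRing L] [Algebra ℝ L] (P : PoissonBracket L)
    (I : Ideal L) :
    -- N ∩ I is a Lie-Jordan ideal of N
    (∀ g x : L, (∀ f ∈ I, P.bracket g f ∈ I) → (∀ f ∈ I, P.bracket x f ∈ I) →
      x ∈ I →
      (((∀ f ∈ I, P.bracket (g * x) f ∈ I) ∧ g * x ∈ I) ∧
       ((∀ f ∈ I, P.bracket (P.bracket g x) f ∈ I) ∧ P.bracket g x ∈ I))) ∧
    -- the quotient N ⧸ (N ∩ I) inherits a Poisson structure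
    (∀ B : Submodule ℝ L,
      (B : Set L) = {g : L | ∀ f ∈ I, P.bracket g f ∈ I} →
      ∃ (mul br :
          (↥B ⧸ Submodule.comap B.subtype (Submodule.restrictScalars ℝ I)) →
          (↥B ⧸ Submodule.comap B.subtype (Submodule.restrictScalars ℝ I)) →
          (↥B ⧸ Submodule.comap B.subtype (Submodule.restrictScalars ℝ I))),
        (∀ x y z, mul (x + y) z = mul x z + mul y z) ∧
        (∀ (r : ℝ) (x y), mul (r • x) y = r • mul x y) ∧
        (∀ x y, mul x y = mul y x) ∧
        (∀ x y z, mul (mul x y) z = mul x (mul y z)) ∧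
        (∀ x y z, br (x + y) z = br x z + br y z) ∧
        (∀ (r : ℝ) (x y), br (r • x) y = r • br x y) ∧
        (∀ x y, br x y = - br y x) ∧
        (∀ x y z, br x (br y z) + br y (br z x) + br z (br x y) = 0) ∧
        (∀ x y z, br (mul x y) z = mul x (br y z) + mul (br x z) y) ∧
        (∀ f g fg : ↥B, (fg : L) = (f : L) * (g : L) →
          mul (Submodule.Quotient.mk f) (Submodule.Quotient.mk g) =
            Submodule.Quotient.mk fg) ∧
        (∀ f g h : ↥B, (h : L) = P.bracket (f : L) (g : L) →
          br (Submodule.Quotient.mk f) (Submodule.Quotient.mk g) =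
            Submodule.Quotient.mk h)) := by
  -- additivity of the bracket derived facts
  have sub_left : ∀ a b c : L,
      P.bracket (a - b) c = P.bracket a c - P.bracket b c := by
    intro a b c
    have h := P.add_left (a - b) b c
    rw [sub_add_cancel] at h
    linear_combination -h
  have hbr_mulN : ∀ g x : L, (∀ f ∈ I, P.bracket g f ∈ I) →
      (∀ f ∈ I, P.bracket x f ∈ I) → ∀ f ∈ I, P.bracket (g * x) f ∈ I := by
    intro g x hg hx f hf
    rw [P.leibniz]
    exact I.add_mem (I.mul_mem_left g (hx f hf)) (I.mul_mem_right x (hg f hf))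
  have hbr_brN : ∀ g x : L, (∀ f ∈ I, P.bracket g f ∈ I) →
      (∀ f ∈ I, P.bracket x f ∈ I) → ∀ f ∈ I, P.bracket (P.bracket g x) f ∈ I := by
    intro g x hg hx f hf
    have key : P.bracket (P.bracket g x) f
        = P.bracket g (P.bracket x f) + P.bracket x (P.bracket f g) := by
      linear_combination P.antisymm (P.bracket g x) f - P.jacobi g x f
    rw [key]
    have h1 : P.bracket x f ∈ I := hx f hf
    have h2 : P.bracket f g ∈ I := by
      rw [P.antisymm]; exact I.neg_mem (hg f hf)
    exact I.add_mem (hg _ h1) (hx _ h2)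
  constructor
  · intro g x hg hx hxI
    exact ⟨⟨hbr_mulN g x hg hx, I.mul_mem_left g hxI⟩,
      ⟨hbr_brN g x hg hx, hg x hxI⟩⟩
  · intro B hB
    have hBmem : ∀ g : L, g ∈ B ↔ ∀ f ∈ I, P.bracket g f ∈ I := by
      intro g
      constructor
      · intro h; exact (Set.ext_iff.mp hB g).mp h
      · intro h; show g ∈ (B : Set L); rw [hB]; exact h
    set K := Submodule.comap B.subtype (Submodule.restrictScalars ℝ I) with hK
    have memN : ∀ b : B, ∀ f ∈ I, P.bracket (b : L) f ∈ I :=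
      fun b => (hBmem b).mp b.2
    let mulB : B → B → B := fun f g =>
      ⟨(f : L) * g, (hBmem _).mpr (hbr_mulN _ _ (memN f) (memN g))⟩
    let brB : B → B → B := fun f g =>
      ⟨P.bracket (f : L) g, (hBmem _).mpr (hbr_brN _ _ (memN f) (memN g))⟩
    have coe_mulB : ∀ a b : B, ((mulB a b : B) : L) = (a : L) * b := fun _ _ => rfl
    have coe_brB : ∀ a b : B, ((brB a b : B) : L) = P.bracket (a : L) b :=
      fun _ _ => rfl
    -- well-definedness of the two products modulo K
    open Relator in
    have wdmul : ((Submodule.quotientRel K) ⇒ (Submodule.quotientRel K) ⇒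
        (Submodule.quotientRel K)) mulB mulB := by
      intro a b hab c d hcd
      rw [Submodule.quotientRel_def] at hab hcd ⊢
      have hab' : ((a : L) - b) ∈ I := hab
      have hcd' : ((c : L) - d) ∈ I := hcd
      have key : ((mulB a c - mulB b d : B) : L)
          = (a : L) * ((c : L) - d) + ((a : L) - b) * d := by
        push_cast [coe_mulB]; ring
      show ((mulB a c - mulB b d : B) : L) ∈ I
      rw [key]
      exact I.add_mem (I.mul_mem_left _ hcd') (I.mul_mem_right _ hab')
    open Relator in
    have wdbr : ((Submodule.quotientRel K) ⇒ (Submodule.quotientRel K) ⇒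
        (Submodule.quotientRel K)) brB brB := by
      intro a b hab c d hcd
      rw [Submodule.quotientRel_def] at hab hcd ⊢
      have hab' : ((a : L) - b) ∈ I := hab
      have hcd' : ((c : L) - d) ∈ I := hcd
      have key : ((brB a c - brB b d : B) : L)
          = P.bracket ((a : L) - b) (c : L) - P.bracket ((c : L) - d) (b : L) := by
        push_cast [coe_brB]
        linear_combination (-sub_left (a : L) (b : L) (c : L))
          + sub_left (c : L) (d : L) (b : L)
          + P.antisymm (c : L) (b : L) - P.antisymm (d : L) (b : L)
      show ((brB a c - brB b d : B) : L) ∈ I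
      rw [key]
      refine I.sub_mem ?_ ?_
      · rw [P.antisymm]
        exact I.neg_mem (memN c _ hab')
      · rw [P.antisymm]
        exact I.neg_mem (memN b _ hcd')
    refine ⟨Quotient.map₂' mulB wdmul, Quotient.map₂' brB wdbr, ?_⟩
    have hmulmk : ∀ a b : B,
        Quotient.map₂' mulB wdmul (Submodule.Quotient.mk a) (Submodule.Quotient.mk b)
          = Submodule.Quotient.mk (mulB a b) := fun _ _ => rfl
    have hbrmk : ∀ a b : B,
        Quotient.map₂' brB wdbr (Submodule.Quotient.mk a) (Submodule.Quotient.mk b)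
          = Submodule.Quotient.mk (brB a b) := fun _ _ => rfl
    have hsurj := Submodule.Quotient.mk_surjective K
    refine ⟨?_, ?_, ?_, ?_, ?_, ?_, ?_, ?_, ?_, ?_, ?_⟩
    · intro x y z
      obtain ⟨a, rfl⟩ := hsurj x; obtain ⟨b, rfl⟩ := hsurj y; obtain ⟨c, rfl⟩ := hsurj z
      rw [← Submodule.Quotient.mk_add, hmulmk, hmulmk, hmulmk,
        ← Submodule.Quotient.mk_add]
      congr 1
      ext
      push_cast [coe_mulB]
      ring
    · intro r x y
      obtain ⟨a, rfl⟩ := hsurj x; obtain ⟨b, rfl⟩ := hsurj y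
      rw [← Submodule.Quotient.mk_smul, hmulmk, hmulmk, ← Submodule.Quotient.mk_smul]
      congr 1
      ext
      push_cast [coe_mulB]
      exact smul_mul_assoc r _ _
    · intro x y
      obtain ⟨a, rfl⟩ := hsurj x; obtain ⟨b, rfl⟩ := hsurj y
      rw [hmulmk, hmulmk]
      congr 1
      ext
      push_cast [coe_mulB]
      ring
    · intro x y z
      obtain ⟨a, rfl⟩ := hsurj x; obtain ⟨b, rfl⟩ := hsurj y; obtain ⟨c, rfl⟩ := hsurj z
      rw [hmulmk, hmulmk, hmulmk, hmulmk]
      congr 1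
      ext
      push_cast [coe_mulB]
      ring
    · intro x y z
      obtain ⟨a, rfl⟩ := hsurj x; obtain ⟨b, rfl⟩ := hsurj y; obtain ⟨c, rfl⟩ := hsurj z
      rw [← Submodule.Quotient.mk_add, hbrmk, hbrmk, hbrmk,
        ← Submodule.Quotient.mk_add]
      congr 1
      ext
      push_cast [coe_brB]
      exact P.add_left _ _ _
    · intro r x y
      obtain ⟨a, rfl⟩ := hsurj x; obtain ⟨b, rfl⟩ := hsurj y
      rw [← Submodule.Quotient.mk_smul, hbrmk, hbrmk, ← Submodule.Quotient.mk_smul]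
      congr 1
      ext
      push_cast [coe_brB]
      exact P.smul_left r _ _
    · intro x y
      obtain ⟨a, rfl⟩ := hsurj x; obtain ⟨b, rfl⟩ := hsurj y
      rw [hbrmk, hbrmk, ← Submodule.Quotient.mk_neg]
      congr 1
      ext
      push_cast [coe_brB]
      exact P.antisymm _ _
    · intro x y z
      obtain ⟨a, rfl⟩ := hsurj x; obtain ⟨b, rfl⟩ := hsurj y; obtain ⟨c, rfl⟩ := hsurj z
      rw [hbrmk, hbrmk, hbrmk, hbrmk, hbrmk, hbrmk,
        ← Submodule.Quotient.mk_add, ← Submodule.Quotient.mk_add,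
        ← Submodule.Quotient.mk_zero K]
      congr 1
      ext
      push_cast [coe_brB]
      exact P.jacobi _ _ _
    · intro x y z
      obtain ⟨a, rfl⟩ := hsurj x; obtain ⟨b, rfl⟩ := hsurj y; obtain ⟨c, rfl⟩ := hsurj z
      rw [hmulmk, hbrmk, hbrmk, hbrmk, hmulmk, hmulmk, ← Submodule.Quotient.mk_add]
      congr 1
      ext
      push_cast [coe_mulB, coe_brB]
      exact P.leibniz _ _ _
    · intro f g fg hfg
      rw [hmulmk]
      congr 1
      ext
      push_cast [coe_mulB]
      exact hfg.symm
    · intro f g h hfg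
      rw [hbrmk]
      congr 1
      ext
      push_cast [coe_brB]
      exact hfg.symm
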